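/- For a real sequence s_0, s_1, s_2, ..., with Hankel determinants Δ_{p,k} = det[(s_{p+i+j})_{0 ≤ i,j ≤ k-1}], one has Δ_{2,k}·Δ_{0,k} − Δ_{2,k-1}·Δ_{0,k+1} = Δ_{1,k}² for all k ≥ 1. -/

import Mathlib

/-- Hankel determinant `Δ_{p,k}` of a real sequence:
the determinant of the `k × k` matrix with `(i,j)` entry `s (p + i + j)`.
By convention `Δ_{p,0} = 1` (determinant of the empty matrix). -/
noncomputable def hankelDetN (s : ℕ → ℝ) (p k : ℕ) : ℝ :=
  (Matrix.of fun i j : Fin k => s (p + (i : ℕ) + (j : ℕ))).det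

set_option linter.unusedSectionVars false

open Matrix Finset

variable {R : Type*} [CommRing R]

lemma det_updateRow_finset_sum {n : Type*} [DecidableEq n] [Fintype n]
    (M : Matrix n n R) (j : n) {ι : Type*} [DecidableEq ι] (s : Finset ι) (f : ι → n → R) :
    (M.updateRow j (∑ k ∈ s, f k)).det = ∑ k ∈ s, (M.updateRow j (f k)).det := by
  induction s using Finset.induction with
  | empty =>
      simp only [Finset.sum_empty]
      exact Matrix.det_eq_zero_of_row_eq_zero j (fun x => by simp)
  | insert _ _ h ih =>
      rw [Finset.sum_insert h, Matrix.det_updateRow_add, ih, Finset.sum_insert h]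

lemma updateRow_comm {n : Type*} [DecidableEq n] (M : Matrix n n R) {i j : n}
    (h : i ≠ j) (u v : n → R) :
    (M.updateRow i u).updateRow j v = (M.updateRow j v).updateRow i u := by
  ext a b
  simp only [Matrix.updateRow_apply]
  rcases eq_or_ne a i with rfl | ha <;> rcases eq_or_ne a j with rfl | hb <;>
    simp_all

section D
variable (m : ℕ)

lemma det_single_rows (u v : Fin (m+2)) :
    (((1 : Matrix (Fin (m+2)) (Fin (m+2)) R).updateRow 0 (Pi.single u 1)).updateRow (Fin.last (m+1))
      (Pi.single v 1)).det =
    if u = 0 ∧ v = Fin.last (m+1) then 1 else if u = Fin.last (m+1) ∧ v = 0 then -1 else 0 := by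
  have h0l : (0 : Fin (m+2)) ≠ Fin.last (m+1) := by simp [Fin.ext_iff]
  have hone : ∀ w : Fin (m+2), (1 : Matrix (Fin (m+2)) (Fin (m+2)) R) w = Pi.single w 1 := by
    intro w; funext j; simp [Matrix.one_apply, Pi.single_apply, eq_comm]
  set A := ((1 : Matrix (Fin (m+2)) (Fin (m+2)) R).updateRow 0 (Pi.single u 1)).updateRow
      (Fin.last (m+1)) (Pi.single v 1) with hA
  have hrow0 : A 0 = Pi.single u 1 := by
    rw [hA, Matrix.updateRow_ne h0l, Matrix.updateRow_self]
  have hrowl : A (Fin.last (m+1)) = Pi.single v 1 := by rw [hA, Matrix.updateRow_self]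
  have hrowmid : ∀ w : Fin (m+2), w ≠ 0 → w ≠ Fin.last (m+1) → A w = Pi.single w 1 := by
    intro w hw0 hwl
    rw [hA, Matrix.updateRow_ne hwl, Matrix.updateRow_ne hw0, hone]
  rcases eq_or_ne u 0 with rfl | hu0
  · rcases eq_or_ne v (Fin.last (m+1)) with rfl | hvl
    · have hA1 : A = 1 := by
        apply funext
        intro i
        rcases eq_or_ne i 0 with rfl | hi0
        · rw [hrow0, hone]
        · rcases eq_or_ne i (Fin.last (m+1)) with rfl | hil
          · rw [hrowl, hone]
          · rw [hrowmid i hi0 hil, hone]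
      rw [hA1, Matrix.det_one, if_pos ⟨rfl, rfl⟩]
    · rw [if_neg (by rintro ⟨-, h⟩; exact hvl h), if_neg (by rintro ⟨h, -⟩; exact h0l h)]
      refine Matrix.det_zero_of_row_eq hvl ?_
      rcases eq_or_ne v 0 with rfl | hv0
      · rw [hrow0, hrowl]
      · rw [hrowmid v hv0 hvl, hrowl]
  · rcases eq_or_ne u (Fin.last (m+1)) with rfl | hul
    · rcases eq_or_ne v 0 with rfl | hv0
      · rw [if_neg (by rintro ⟨h, -⟩; exact h0l h.symm), if_pos ⟨rfl, rfl⟩]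
        have hperm : A = (1 : Matrix (Fin (m+2)) (Fin (m+2)) R).submatrix
            (Equiv.swap 0 (Fin.last (m+1))) id := by
          apply funext
          intro i
          have : ((1 : Matrix (Fin (m+2)) (Fin (m+2)) R).submatrix
              (Equiv.swap 0 (Fin.last (m+1))) id) i
              = (1 : Matrix (Fin (m+2)) (Fin (m+2)) R) (Equiv.swap 0 (Fin.last (m+1)) i) := rfl
          rw [this]
          rcases eq_or_ne i 0 with rfl | hi0
          · rw [hrow0, Equiv.swap_apply_left, hone]
          · rcases eq_or_ne i (Fin.last (m+1)) with rfl | hil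
            · rw [hrowl, Equiv.swap_apply_right, hone]
            · rw [hrowmid i hi0 hil, Equiv.swap_apply_of_ne_of_ne hi0 hil, hone]
        rw [hperm]
        have := Matrix.det_permute (Equiv.swap 0 (Fin.last (m+1)))
          (1 : Matrix (Fin (m+2)) (Fin (m+2)) R)
        rw [this, Matrix.det_one, Equiv.Perm.sign_swap h0l]
        simp
      · rw [if_neg (by rintro ⟨h, -⟩; exact h0l h.symm), if_neg (by rintro ⟨-, h⟩; exact hv0 h)]
        rcases eq_or_ne v (Fin.last (m+1)) with rfl | hvl
        · exact Matrix.det_zero_of_row_eq h0l (by rw [hrow0, hrowl])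
        · exact Matrix.det_zero_of_row_eq hvl (by rw [hrowmid v hv0 hvl, hrowl])
    · rw [if_neg (by rintro ⟨h, -⟩; exact hu0 h), if_neg (by rintro ⟨h, -⟩; exact hul h)]
      exact Matrix.det_zero_of_row_eq (Ne.symm hu0) (by rw [hrow0, hrowmid u hu0 hul])

end D

section P
variable (m : ℕ)

lemma sum_eq_two {α : Type*} [Fintype α] [DecidableEq α] (f : α → R) (a b : α) (hab : a ≠ b)
    (h : ∀ c, c ≠ a → c ≠ b → f c = 0) : ∑ x, f x = f a + f b := by
  rw [← Finset.sum_pair hab]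
  exact (Finset.sum_subset (Finset.subset_univ _) (fun x _ hx =>
    h x (fun h' => hx (by simp [h'])) (fun h' => hx (by simp [h'])))).symm

lemma det_two_updates (a b : Fin (m+2) → R) :
    (((1 : Matrix (Fin (m+2)) (Fin (m+2)) R).updateRow 0 a).updateRow (Fin.last (m+1)) b).det
      = a 0 * b (Fin.last (m+1)) - a (Fin.last (m+1)) * b 0 := by
  have h0l : (0 : Fin (m+2)) ≠ Fin.last (m+1) := by simp [Fin.ext_iff]
  have expand : ∀ (M : Matrix (Fin (m+2)) (Fin (m+2)) R) (j : Fin (m+2)) (c : Fin (m+2) → R),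
      (M.updateRow j c).det = ∑ w, c w * (M.updateRow j (Pi.single w 1)).det := by
    intro M j c
    have hc : c = ∑ w, c w • (Pi.single w (1:R) : Fin (m+2) → R) := by
      funext x; simp [Pi.single_apply]
    conv_lhs => rw [hc]
    rw [det_updateRow_finset_sum]
    exact Finset.sum_congr rfl fun w _ => by rw [Matrix.det_updateRow_smul]
  rw [expand]
  have key : ∀ v, (((1 : Matrix (Fin (m+2)) (Fin (m+2)) R).updateRow 0 a).updateRow
      (Fin.last (m+1)) (Pi.single v 1)).det
      = ∑ u, a u * (if u = 0 ∧ v = Fin.last (m+1) then 1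
          else if u = Fin.last (m+1) ∧ v = 0 then (-1:R) else 0) := by
    intro v
    rw [updateRow_comm _ h0l, expand]
    refine Finset.sum_congr rfl fun u _ => ?_
    rw [updateRow_comm _ (Ne.symm h0l), det_single_rows]
  rw [Finset.sum_congr rfl (fun v _ => by rw [key])]
  have hinner : ∀ v, (∑ u, a u * (if u = 0 ∧ v = Fin.last (m+1) then 1
      else if u = Fin.last (m+1) ∧ v = 0 then (-1:R) else 0))
      = a 0 * (if v = Fin.last (m+1) then 1 else 0)
        + a (Fin.last (m+1)) * (if v = 0 then (-1:R) else 0) := by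
    intro v
    rw [sum_eq_two _ 0 (Fin.last (m+1)) h0l (fun c hc0 hcl => by
      rw [if_neg (fun h => hc0 h.1), if_neg (fun h => hcl h.1), mul_zero])]
    congr 1
    · congr 1
      by_cases h : v = Fin.last (m+1) <;> simp [h, h0l]
    · congr 1
      by_cases h : v = 0 <;> simp [h, Ne.symm h0l]
  rw [Finset.sum_congr rfl (fun v _ => by rw [hinner v])]
  rw [sum_eq_two _ 0 (Fin.last (m+1)) h0l (fun c hc0 hcl => by
    rw [if_neg hcl, if_neg hc0]; ring)]
  rw [if_neg h0l, if_pos rfl, if_pos rfl, if_neg (Ne.symm h0l)]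
  ring

end P

section Star
variable (m : ℕ)

theorem star (M : Matrix (Fin (m+2)) (Fin (m+2)) R) :
    M.det * ((M.submatrix Fin.succ Fin.succ).det * (M.submatrix Fin.castSucc Fin.castSucc).det
      - (M.submatrix Fin.succ Fin.castSucc).det * (M.submatrix Fin.castSucc Fin.succ).det)
    = M.det ^ 2 * (M.submatrix (fun i : Fin m => i.castSucc.succ)
        (fun j : Fin m => j.castSucc.succ)).det := by
  have h0l : (0 : Fin (m+2)) ≠ Fin.last (m+1) := by simp [Fin.ext_iff]
  set la : Fin (m+2) := Fin.last (m+1) with hla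
  set P : Matrix (Fin (m+2)) (Fin (m+2)) R := Matrix.of fun x j =>
    if j = 0 then M.adjugate x 0 else if j = la then M.adjugate x la
    else (1 : Matrix (Fin (m+2)) (Fin (m+2)) R) x j with hP
  set Q : Matrix (Fin (m+2)) (Fin (m+2)) R := Matrix.of fun i j =>
    if j = 0 then M.det * (1 : Matrix (Fin (m+2)) (Fin (m+2)) R) i 0
    else if j = la then M.det * (1 : Matrix (Fin (m+2)) (Fin (m+2)) R) i la
    else M i j with hQ
  -- M * P = Q
  have hMP : M * P = Q := by
    ext i j
    rw [Matrix.mul_apply]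
    by_cases hj0 : j = 0
    · subst hj0
      have : ∀ x, M i x * P x 0 = M i x * M.adjugate x 0 := fun x => by
        rw [hP]; simp
      rw [Finset.sum_congr rfl fun x _ => this x, ← Matrix.mul_apply, Matrix.mul_adjugate]
      rw [hQ]; simp
    · by_cases hjl : j = la
      · subst hjl
        have : ∀ x, M i x * P x la = M i x * M.adjugate x la := fun x => by
          rw [hP]; simp [Ne.symm h0l]
        rw [Finset.sum_congr rfl fun x _ => this x, ← Matrix.mul_apply, Matrix.mul_adjugate]
        rw [hQ]; simp [Ne.symm h0l]
      · have : ∀ x, M i x * P x j = M i x * (1 : Matrix (Fin (m+2)) (Fin (m+2)) R) x j :=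
          fun x => by rw [hP]; simp [hj0, hjl]
        rw [Finset.sum_congr rfl fun x _ => this x, ← Matrix.mul_apply, Matrix.mul_one]
        rw [hQ]; simp [hj0, hjl]
  -- det P
  have hPT : P.transpose = ((1 : Matrix (Fin (m+2)) (Fin (m+2)) R).updateRow 0
      (fun x => M.adjugate x 0)).updateRow la (fun x => M.adjugate x la) := by
    ext j x
    rw [Matrix.transpose_apply, hP, Matrix.of_apply, Matrix.updateRow_apply,
      Matrix.updateRow_apply]
    by_cases hj0 : j = 0
    · simp [hj0, h0l]
    · by_cases hjl : j = la
      · simp [hj0, hjl, Ne.symm h0l]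
      · simp [hj0, hjl, Matrix.one_apply, eq_comm]
  have hdetP : P.det = M.adjugate 0 0 * M.adjugate la la - M.adjugate la 0 * M.adjugate 0 la := by
    rw [← Matrix.det_transpose P, hPT, det_two_updates]
  -- det Q
  have hQ1 : Q.submatrix Fin.succ Fin.succ = Matrix.of fun (i j : Fin (m+1)) =>
      if j = Fin.last m then M.det * (1 : Matrix (Fin (m+2)) (Fin (m+2)) R) i.succ la
      else M i.succ j.succ := by
    ext i j
    rw [Matrix.submatrix_apply, hQ, Matrix.of_apply, Matrix.of_apply]
    rw [if_neg (Fin.succ_ne_zero j)]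
    by_cases hj : j = Fin.last m
    · rw [if_pos hj, if_pos (by rw [hj, hla, Fin.succ_last])]
    · rw [if_neg hj, if_neg (fun h => hj (by
        rw [hla, ← Fin.succ_last] at h; exact Fin.succ_inj.mp h))]
  have hdetQ : Q.det = M.det ^ 2 * (M.submatrix (fun i : Fin m => i.castSucc.succ)
      (fun j : Fin m => j.castSucc.succ)).det := by
    rw [Matrix.det_succ_column_zero]
    rw [Finset.sum_eq_single_of_mem 0 (Finset.mem_univ _) (fun i _ hi => by
      rw [hQ]; simp [Matrix.one_apply_ne hi])]
    rw [Fin.succAbove_zero]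
    have h00 : Q 0 0 = M.det := by rw [hQ]; simp
    rw [h00]
    simp only [Fin.val_zero, pow_zero, one_mul]
    -- expand along last column of Q.submatrix succ succ
    rw [Matrix.det_succ_column (Q.submatrix Fin.succ Fin.succ) (Fin.last m)]
    rw [Finset.sum_eq_single_of_mem (Fin.last m) (Finset.mem_univ _) (fun i _ hi => by
      rw [hQ1]
      simp only [Matrix.of_apply, if_pos rfl]
      rw [Matrix.one_apply_ne (fun h => hi (by
        rw [hla, ← Fin.succ_last] at h; exact Fin.succ_inj.mp h))]
      simp)]
    rw [hQ1]
    simp only [Matrix.of_apply, if_pos rfl]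
    rw [show (1 : Matrix (Fin (m+2)) (Fin (m+2)) R) (Fin.last m).succ la = 1 by
      rw [hla, Fin.succ_last]; exact Matrix.one_apply_eq _]
    have hev : ((-1:R)) ^ ((Fin.last m : ℕ) + (Fin.last m : ℕ)) = 1 :=
      Even.neg_one_pow ⟨(Fin.last m : ℕ), rfl⟩
    rw [hev]
    have hsub : ((Q.submatrix Fin.succ Fin.succ).submatrix
        (Fin.last m).succAbove (Fin.last m).succAbove)
        = M.submatrix (fun i : Fin m => i.castSucc.succ) (fun j : Fin m => j.castSucc.succ) := by
      rw [Fin.succAbove_last]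
      ext i j
      simp only [Matrix.submatrix_apply]
      rw [hQ, Matrix.of_apply]
      rw [if_neg (Fin.succ_ne_zero _), if_neg (by
        rw [hla, Fin.succ_castSucc]
        exact fun h => absurd h (Fin.castSucc_lt_last _).ne)]
    rw [hQ1] at hsub
    rw [hsub]
    simp
    ring
  -- combine
  have hcomb : M.det * P.det = M.det ^ 2 * (M.submatrix (fun i : Fin m => i.castSucc.succ)
      (fun j : Fin m => j.castSucc.succ)).det := by
    rw [← Matrix.det_mul, hMP, hdetQ]
  rw [hdetP] at hcomb
  -- adjugate entries as minors
  have ha00 : M.adjugate 0 0 = (M.submatrix Fin.succ Fin.succ).det := by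
    rw [Matrix.adjugate_fin_succ_eq_det_submatrix]
    simp [Fin.succAbove_zero]
  have hall : M.adjugate la la = (M.submatrix Fin.castSucc Fin.castSucc).det := by
    rw [Matrix.adjugate_fin_succ_eq_det_submatrix]
    rw [hla, Fin.succAbove_last]
    rw [show ((-1:R)) ^ ((Fin.last (m+1) : ℕ) + (Fin.last (m+1) : ℕ)) = 1 from
      Even.neg_one_pow ⟨(Fin.last (m+1) : ℕ), rfl⟩]
    ring
  have hal0 : M.adjugate la 0 = (-1:R) ^ (m+1) * (M.submatrix Fin.succ Fin.castSucc).det := by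
    rw [Matrix.adjugate_fin_succ_eq_det_submatrix]
    rw [hla, Fin.succAbove_zero, Fin.succAbove_last]
    norm_num
  have ha0l : M.adjugate 0 la = (-1:R) ^ (m+1) * (M.submatrix Fin.castSucc Fin.succ).det := by
    rw [Matrix.adjugate_fin_succ_eq_det_submatrix]
    rw [hla, Fin.succAbove_zero, Fin.succAbove_last]
    norm_num
  rw [ha00, hall, hal0, ha0l] at hcomb
  have hε : ((-1:R) ^ (m+1)) * ((-1:R) ^ (m+1)) = 1 := by
    rw [← pow_add]
    exact Even.neg_one_pow ⟨m+1, by ring⟩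
  calc M.det * ((M.submatrix Fin.succ Fin.succ).det * (M.submatrix Fin.castSucc Fin.castSucc).det
      - (M.submatrix Fin.succ Fin.castSucc).det * (M.submatrix Fin.castSucc Fin.succ).det)
      = M.det * ((M.submatrix Fin.succ Fin.succ).det * (M.submatrix Fin.castSucc Fin.castSucc).det
        - ((-1:R) ^ (m+1) * (M.submatrix Fin.succ Fin.castSucc).det)
          * ((-1:R) ^ (m+1) * (M.submatrix Fin.castSucc Fin.succ).det)) := by
        rw [show ((-1:R) ^ (m+1) * (M.submatrix Fin.succ Fin.castSucc).det)
          * ((-1:R) ^ (m+1) * (M.submatrix Fin.castSucc Fin.succ).det)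
          = (((-1:R) ^ (m+1)) * ((-1:R) ^ (m+1)))
            * ((M.submatrix Fin.succ Fin.castSucc).det
              * (M.submatrix Fin.castSucc Fin.succ).det) from by ring, hε, one_mul]
    _ = M.det ^ 2 * (M.submatrix (fun i : Fin m => i.castSucc.succ)
        (fun j : Fin m => j.castSucc.succ)).det := hcomb

end Star

theorem desnanot_jacobi (m : ℕ) (M : Matrix (Fin (m+2)) (Fin (m+2)) ℝ) :
    (M.submatrix Fin.succ Fin.succ).det * (M.submatrix Fin.castSucc Fin.castSucc).det
      - (M.submatrix Fin.succ Fin.castSucc).det * (M.submatrix Fin.castSucc Fin.succ).det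
    = M.det * (M.submatrix (fun i : Fin m => i.castSucc.succ)
        (fun j : Fin m => j.castSucc.succ)).det := by
  set N : Matrix (Fin (m+2)) (Fin (m+2)) (Polynomial ℝ) := Matrix.charmatrix (-M) with hN
  have hne : N.det ≠ 0 := by
    have := (Matrix.charpoly_monic (-M)).ne_zero
    simpa [hN, Matrix.charpoly] using this
  have hstar := star m N
  have hcancel : (N.submatrix Fin.succ Fin.succ).det * (N.submatrix Fin.castSucc Fin.castSucc).det
      - (N.submatrix Fin.succ Fin.castSucc).det * (N.submatrix Fin.castSucc Fin.succ).det
      = N.det * (N.submatrix (fun i : Fin m => i.castSucc.succ)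
          (fun j : Fin m => j.castSucc.succ)).det := by
    apply mul_left_cancel₀ hne
    rw [hstar]
    ring
  have hφN : N.map (Polynomial.evalRingHom (0:ℝ)) = M := by
    ext i j
    simp only [hN, Matrix.map_apply, Matrix.charmatrix_apply, Matrix.diagonal_apply]
    split_ifs <;> simp
  have final := congrArg (Polynomial.evalRingHom (0:ℝ)) hcancel
  simp only [map_sub, _root_.map_mul, RingHom.map_det, RingHom.mapMatrix_apply,
    ← Matrix.submatrix_map, hφN] at final
  exact final

theorem stmt_3 (s : ℕ → ℝ) (k : ℕ) (hk : 1 ≤ k) :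
    hankelDetN s 2 k * hankelDetN s 0 k -
      hankelDetN s 2 (k - 1) * hankelDetN s 0 (k + 1) = (hankelDetN s 1 k) ^ 2 := by
  obtain ⟨m, rfl⟩ : ∃ m, k = m + 1 := ⟨k - 1, (Nat.succ_pred_eq_of_pos hk).symm⟩
  set M : Matrix (Fin (m+2)) (Fin (m+2)) ℝ := Matrix.of fun i j => s ((i:ℕ) + j) with hM
  have e2k : hankelDetN s 2 (m+1) = (M.submatrix Fin.succ Fin.succ).det := by
    unfold hankelDetN
    congr 1
    ext i j
    simp only [hM, Matrix.of_apply, Matrix.submatrix_apply]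
    exact congrArg s (by simp only [Fin.val_succ]; omega)
  have e0k : hankelDetN s 0 (m+1) = (M.submatrix Fin.castSucc Fin.castSucc).det := by
    unfold hankelDetN
    congr 1
    ext i j
    simp only [hM, Matrix.of_apply, Matrix.submatrix_apply]
    exact congrArg s (by simp only [Fin.coe_castSucc]; omega)
  have e1k : hankelDetN s 1 (m+1) = (M.submatrix Fin.succ Fin.castSucc).det := by
    unfold hankelDetN
    congr 1
    ext i j
    simp only [hM, Matrix.of_apply, Matrix.submatrix_apply]
    exact congrArg s (by simp only [Fin.val_succ, Fin.coe_castSucc]; omega)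
  have e1k' : hankelDetN s 1 (m+1) = (M.submatrix Fin.castSucc Fin.succ).det := by
    unfold hankelDetN
    congr 1
    ext i j
    simp only [hM, Matrix.of_apply, Matrix.submatrix_apply]
    exact congrArg s (by simp only [Fin.val_succ, Fin.coe_castSucc]; omega)
  have e0k1 : hankelDetN s 0 (m+1+1) = M.det := by
    unfold hankelDetN
    congr 1
    ext i j
    simp only [hM, Matrix.of_apply]
    exact congrArg s (by omega)
  have e2km : hankelDetN s 2 (m+1-1) = (M.submatrix (fun i : Fin m => i.castSucc.succ)
      (fun j : Fin m => j.castSucc.succ)).det := by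
    unfold hankelDetN
    congr 1
    ext i j
    simp only [hM, Matrix.of_apply, Matrix.submatrix_apply]
    exact congrArg s (by simp only [Fin.val_succ, Fin.coe_castSucc]; omega)
  have hdj := desnanot_jacobi m M
  rw [e2k, e0k, e0k1, e2km, e1k, pow_two]
  have h11 : (M.submatrix Fin.succ Fin.castSucc).det = (M.submatrix Fin.castSucc Fin.succ).det :=
    e1k.symm.trans e1k'
  rw [h11] at hdj ⊢
  linarith [hdj]
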